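/- For every μ̂ ∈ P(X) and σ > 0, the map R ↦ Fit_σ(R|μ̂) is continuous with respect to weak convergence of probability measures: if R_n → R weakly in P(X), then Fit_σ(R_n|μ̂) → Fit_σ(R|μ̂). -/

import Mathlib

open MeasureTheory Real Set Filter

abbrev Pt (d : ℕ) := EuclideanSpace ℝ (Fin d)

-- Data-fitting functional `Fit_σ(R|μ̂) = ∫ -log (∫ exp(-‖x-y‖²/(2σ²)) dR(x)) dμ̂(y)`.
noncomputable def Fitf {d : ℕ} (σ : ℝ) (R μhat : Measure (Pt d)) : ℝ :=
  ∫ y, -Real.log (∫ x, Real.exp (-‖x - y‖ ^ 2 / (2 * σ ^ 2)) ∂ R) ∂μhat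

/-- `R ↦ Fit_σ(R|μ̂)` is continuous with respect to weak convergence of
probability measures: if `R_n → R` weakly, then `Fit_σ(R_n|μ̂) → Fit_σ(R|μ̂)`. -/
theorem stmt_14 {d : ℕ} (X : Set (Pt d)) (hXc : IsCompact X) (hXne : X.Nonempty)
    (μhat : Measure (Pt d)) [IsProbabilityMeasure μhat] (hμhatX : μhat Xᶜ = 0)
    (σ : ℝ) (hσ : 0 < σ)
    (Rs : ℕ → Measure (Pt d)) (R : Measure (Pt d))
    (hRsP : ∀ k, IsProbabilityMeasure (Rs k)) [IsProbabilityMeasure R]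
    (hRsX : ∀ k, Rs k Xᶜ = 0) (hRX : R Xᶜ = 0)
    (hRw : ∀ f : BoundedContinuousFunction (Pt d) ℝ,
      Tendsto (fun k => ∫ x, f x ∂(Rs k)) atTop (nhds (∫ x, f x ∂ R))) :
    Tendsto (fun k => Fitf σ (Rs k) μhat) atTop (nhds (Fitf σ R μhat)) := by
  classical
  set D := Metric.diam X with hD
  have hσ2 : (0:ℝ) < 2 * σ ^ 2 := by positivity
  set K : Pt d → Pt d → ℝ := fun y x => Real.exp (-‖x - y‖ ^ 2 / (2 * σ ^ 2)) with hK
  have hKcont : ∀ y : Pt d, Continuous (K y) := by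
    intro y; unfold K; fun_prop
  have hKcont' : ∀ x : Pt d, Continuous fun y => K y x := by
    intro x; unfold K; fun_prop
  have hKle1 : ∀ y x : Pt d, K y x ≤ 1 := by
    intro y x
    rw [hK, Real.exp_le_one_iff]
    apply div_nonpos_of_nonpos_of_nonneg
    · rw [neg_nonpos]; positivity
    · positivity
  have hKnorm : ∀ y x : Pt d, ‖K y x‖ ≤ 1 := by
    intro y x
    rw [Real.norm_eq_abs, abs_of_pos (Real.exp_pos _)]
    exact hKle1 y x
  set f : Pt d → BoundedContinuousFunction (Pt d) ℝ := fun y =>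
    BoundedContinuousFunction.ofNormedAddCommGroup (K y) (hKcont y) 1 (hKnorm y) with hf
  set g : Measure (Pt d) → Pt d → ℝ := fun μ y => ∫ x, K y x ∂μ with hg
  have hfg : ∀ (μ : Measure (Pt d)) (y : Pt d), (∫ x, (f y) x ∂μ) = g μ y := by
    intro μ y; rfl
  -- lower bound and positivity on X
  set c : ℝ := Real.exp (-D ^ 2 / (2 * σ ^ 2)) with hc
  have hglb : ∀ (μ : Measure (Pt d)) [IsProbabilityMeasure μ], μ Xᶜ = 0 →
      ∀ y ∈ X, c ≤ g μ y := by
    intro μ hμ hμX y hy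
    have haeX : ∀ᵐ x ∂μ, x ∈ X := mem_ae_iff.mpr hμX
    have hmono : ∀ᵐ x ∂μ, c ≤ K y x := by
      filter_upwards [haeX] with x hx
      rw [hK, hc]
      apply Real.exp_le_exp.mpr
      have hdd : ‖x - y‖ ^ 2 ≤ D ^ 2 := by
        calc ‖x - y‖ ^ 2 = dist x y ^ 2 := by rw [dist_eq_norm]
          _ ≤ D ^ 2 := pow_le_pow_left₀ dist_nonneg
              (Metric.dist_le_diam_of_mem hXc.isBounded hx hy) 2
      exact (div_le_div_iff_of_pos_right hσ2).mpr (neg_le_neg hdd)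
    have hint : Integrable (K y) μ := (f y).integrable μ
    have := integral_mono_ae (integrable_const c) hint hmono
    simpa using this
  have hgle1 : ∀ (μ : Measure (Pt d)) [IsProbabilityMeasure μ], ∀ y, g μ y ≤ 1 := by
    intro μ hμ y
    have := integral_mono ((f y).integrable μ) (integrable_const 1) (hKle1 y)
    simpa [hfg] using this
  -- continuity of g μ
  have hgcont : ∀ (μ : Measure (Pt d)) [IsProbabilityMeasure μ], Continuous (g μ) := by
    intro μ hμ
    apply continuous_of_dominated (bound := fun _ => (1:ℝ))
    · exact fun y => ((hKcont y).aestronglyMeasurable)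
    · exact fun y => Filter.Eventually.of_forall (fun x => hKnorm y x)
    · exact integrable_const 1
    · exact Filter.Eventually.of_forall (fun x => hKcont' x)
  -- pointwise convergence
  have hg_tendsto : ∀ y, Tendsto (fun k => g (Rs k) y) atTop (nhds (g R y)) := by
    intro y
    have := hRw (f y)
    simpa [hfg] using this
  have hcpos : 0 < c := Real.exp_pos _
  -- a.e. y is in X
  have haeY : ∀ᵐ y ∂μhat, y ∈ X := mem_ae_iff.mpr hμhatX
  have hB : (0:ℝ) ≤ -Real.log c := by
    rw [hc, Real.log_exp, neg_div, neg_neg]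
    positivity
  simp only [Fitf]
  have key : ∀ (μ : Measure (Pt d)),
      (∫ y, -Real.log (∫ x, Real.exp (-‖x - y‖ ^ 2 / (2 * σ ^ 2)) ∂μ) ∂μhat)
        = ∫ y, -Real.log (g μ y) ∂μhat := fun μ => rfl
  rw [key R]
  have : ∀ k, (∫ y, -Real.log (∫ x, Real.exp (-‖x - y‖ ^ 2 / (2 * σ ^ 2)) ∂(Rs k)) ∂μhat)
      = ∫ y, -Real.log (g (Rs k) y) ∂μhat := fun k => key (Rs k)
  simp only [this]
  apply tendsto_integral_of_dominated_convergence (bound := fun _ => -Real.log c)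
  · intro k
    have := hRsP k
    exact ((Real.measurable_log.comp (hgcont (Rs k)).measurable).neg).aestronglyMeasurable
  · exact integrable_const _
  · intro k
    have := hRsP k
    filter_upwards [haeY] with y hy
    have h1 : c ≤ g (Rs k) y := hglb (Rs k) (hRsX k) y hy
    have h2 : g (Rs k) y ≤ 1 := hgle1 (Rs k) y
    have hlogle : Real.log c ≤ Real.log (g (Rs k) y) := Real.log_le_log hcpos h1
    have hlognp : Real.log (g (Rs k) y) ≤ 0 := Real.log_nonpos (le_trans hcpos.le h1) h2
    rw [Real.norm_eq_abs, abs_of_nonneg (by linarith)]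
    linarith
  · filter_upwards [haeY] with y hy
    have hpos : 0 < g R y := lt_of_lt_of_le hcpos (hglb R hRX y hy)
    exact ((Real.continuousAt_log (ne_of_gt hpos)).tendsto.comp (hg_tendsto y)).neg
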